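/- For every choice of rewards r(0), r(1) ∈ [0,1] with r(0) − r(1) = Δ, the probability row vector μ = (p/(p+e^{−η·Δ}), e^{−η·Δ}/(p+e^{−η·Δ})) is stationary for the transition matrix Q(r): μ·Q(r) = μ. -/

import Mathlib

/-- The transition matrix of the exponential-switching dynamics: with
`q₀ = (1/2)e^{-η r₀}` and `q₁ = (1/2)e^{-η r₁}`, the first row is `(1 - q₀, q₀)`
and the second row is `(p q₁, 1 - p q₁)`. -/
noncomputable def Qmat (p η r0 r1 : ℝ) : Matrix (Fin 2) (Fin 2) ℝ :=
  !![1 - (1 / 2) * Real.exp (-η * r0), (1 / 2) * Real.exp (-η * r0);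
     p * ((1 / 2) * Real.exp (-η * r1)), 1 - p * ((1 / 2) * Real.exp (-η * r1))]

/-- The probability row vector `μ = (p/(p + e^{-ηΔ}), e^{-ηΔ}/(p + e^{-ηΔ}))`. -/
noncomputable def muStat (p η Δ : ℝ) : Fin 2 → ℝ :=
  ![p / (p + Real.exp (-η * Δ)), Real.exp (-η * Δ) / (p + Real.exp (-η * Δ))]

/-- For any rewards `r₀, r₁ ∈ [0,1]` with `r₀ - r₁ = Δ`, the row vector `μ` is
stationary for the transition matrix `Q(r)`: `μ · Q(r) = μ`. -/
theorem muStat_stationary (p η Δ r0 r1 : ℝ)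
    (hp : p ∈ Set.Ioc (0 : ℝ) 1) (hη : 0 < η) (hΔ : Δ ∈ Set.Icc (0 : ℝ) 1)
    (hr0 : r0 ∈ Set.Icc (0 : ℝ) 1) (hr1 : r1 ∈ Set.Icc (0 : ℝ) 1)
    (hgap : r0 - r1 = Δ) :
    Matrix.vecMul (muStat p η Δ) (Qmat p η r0 r1) = muStat p η Δ := by
  have hp0 := hp.1
  have hden : p + Real.exp (-η * Δ) ≠ 0 := by positivity
  have hkey : Real.exp (-η * Δ) * Real.exp (-η * r1) = Real.exp (-η * r0) := by
    rw [← Real.exp_add]; congr 1; nlinarith [hgap]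
  simp only [neg_mul] at hkey hden
  funext i
  fin_cases i
  · simp only [Matrix.vecMul, dotProduct, muStat, Qmat, Fin.sum_univ_two,
      Matrix.cons_val', Matrix.cons_val_zero, Matrix.cons_val_one, Matrix.head_cons,
      Matrix.empty_val', Matrix.cons_val_fin_one, Matrix.head_fin_const, neg_mul,
      Fin.isValue, Matrix.of_apply, Fin.zero_eta, Fin.mk_one]
    field_simp
    linear_combination hkey
  · simp only [Matrix.vecMul, dotProduct, muStat, Qmat, Fin.sum_univ_two,
      Matrix.cons_val', Matrix.cons_val_zero, Matrix.cons_val_one, Matrix.head_cons,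
      Matrix.empty_val', Matrix.cons_val_fin_one, Matrix.head_fin_const, neg_mul,
      Fin.isValue, Matrix.of_apply, Fin.zero_eta, Fin.mk_one]
    field_simp
    linear_combination (-p) * hkey
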